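/- Under the hypotheses of the first-order commutativity expansion, at indices i,j where the joint eigenvalues coincide, the second-order coefficient of the commutator vanishes: [Γ^r, Γ^s]_{ij} = 0 whenever x_i = x_j. -/

import Mathlib

open Asymptotics Filter

/-- Under the first-order commutativity expansion hypotheses, at indices
`(i,j)` where the joint eigenvalues coincide (`x_i = x_j`), the second-order coefficient
of the commutator vanishes: `[Γ^r, Γ^s]_{ij} = 0`. -/
theorem stmt1 (d n : ℕ) (x : Fin n → Fin d → ℝ)
    (D Γ : Fin d → Matrix (Fin n) (Fin n) ℂ)
    (hD : ∀ r, D r = Matrix.diagonal fun i => (x i r : ℂ))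
    (hherm : ∀ r, (Γ r).IsHermitian)
    (h : ℝ → Fin d → Matrix (Fin n) (Fin n) ℂ)
    (hh : ∀ r i j, (fun t => h t r i j) =o[nhds (0 : ℝ)] fun t => t)
    (hcomm : ∀ᶠ t in nhds (0 : ℝ), ∀ r s : Fin d,
      (D r + t • Γ r + h t r) * (D s + t • Γ s + h t s)
        = (D s + t • Γ s + h t s) * (D r + t • Γ r + h t r))
    (i j : Fin n) (hij : x i = x j) (r s : Fin d) :
    (Γ r * Γ s - Γ s * Γ r) i j = 0 := by
  set c : ℂ := (Γ r * Γ s - Γ s * Γ r) i j with hc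
  -- Entry (i,j) of a commutator with D vanishes since x i = x j.
  have hDentry : ∀ (q : Fin d) (M : Matrix (Fin n) (Fin n) ℂ),
      (D q * M - M * D q) i j = 0 := by
    intro q M
    simp only [hD, Matrix.sub_apply, Matrix.diagonal_mul, Matrix.mul_diagonal]
    have : x j q = x i q := by rw [hij]
    rw [this]; ring
  -- The error function collecting all higher-order terms.
  set F : ℝ → ℂ := fun t =>
    (t : ℂ) * (((Γ r * h t s - h t s * Γ r) + (h t r * Γ s - Γ s * h t r)) i j)
      + ((h t r * h t s - h t s * h t r) i j) with hF
  -- Key eventual identity: c * t² = -F t.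
  have key : ∀ᶠ (t : ℝ) in nhds (0 : ℝ), c * (t : ℂ) ^ 2 = -F t := by
    filter_upwards [hcomm] with t ht
    have heq := ht r s
    have hid :
        (D r + t • Γ r + h t r) * (D s + t • Γ s + h t s)
          - (D s + t • Γ s + h t s) * (D r + t • Γ r + h t r)
        = (D r * D s - D s * D r) + t • (D r * Γ s - Γ s * D r)
            + (D r * h t s - h t s * D r)
            + t • (Γ r * D s - D s * Γ r) + (h t r * D s - D s * h t r)
            + (t * t) • (Γ r * Γ s - Γ s * Γ r)
            + t • (Γ r * h t s - h t s * Γ r) + t • (h t r * Γ s - Γ s * h t r)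
            + (h t r * h t s - h t s * h t r) := by
      simp only [mul_add, add_mul, smul_mul_assoc, mul_smul_comm, smul_sub, smul_add,
        smul_smul]
      module
    have hz : ((D r + t • Γ r + h t r) * (D s + t • Γ s + h t s)
          - (D s + t • Γ s + h t s) * (D r + t • Γ r + h t r)) i j = 0 := by
      rw [heq]; simp
    rw [hid] at hz
    have hDD : (D r * D s - D s * D r) i j = 0 := by
      rcases eq_or_ne i j with rfl | hne
      · simp only [hD, Matrix.sub_apply, Matrix.diagonal_mul, Matrix.mul_diagonal,
          Matrix.diagonal_apply_eq]
        ring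
      · simp [hD, Matrix.diagonal_apply_ne _ hne]
    have h1 := hDentry r (Γ s)
    have h2 := hDentry r (h t s)
    have h3 : (Γ r * D s - D s * Γ r) i j = 0 := by
      have := hDentry s (Γ r)
      simp only [Matrix.sub_apply] at this ⊢; linear_combination -this
    have h4 : (h t r * D s - D s * h t r) i j = 0 := by
      have := hDentry s (h t r)
      simp only [Matrix.sub_apply] at this ⊢; linear_combination -this
    simp only [Matrix.add_apply, Matrix.smul_apply] at hz
    rw [hDD, h1, h2, h3, h4] at hz
    simp only [smul_zero, zero_add, add_zero, Complex.real_smul] at hz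
    push_cast at hz
    rw [← hc] at hz
    simp only [hF, Matrix.add_apply, Matrix.sub_apply] at hz ⊢
    linear_combination hz
  -- Each piece of F is o(t²).
  have hcoe : (fun t : ℝ => (t : ℂ)) =O[nhds (0 : ℝ)] (fun t : ℝ => t) :=
    isBigO_of_le _ (fun t => by simp)
  have hmulC : ∀ (M : Matrix (Fin n) (Fin n) ℂ) (q : Fin d),
      (fun t => (M * h t q) i j) =o[nhds (0 : ℝ)] (fun t : ℝ => t) := by
    intro M q
    have : ∀ k : Fin n, (fun t => M i k * h t q k j) =o[nhds (0 : ℝ)] (fun t : ℝ => t) :=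
      fun k => (hh q k j).const_mul_left _
    have hs := Asymptotics.IsLittleO.sum (s := Finset.univ) (fun k _ => this k)
    refine hs.congr' ?_ (by rfl)
    filter_upwards with t
    rw [Matrix.mul_apply, Finset.sum_apply]
  have hCmul : ∀ (M : Matrix (Fin n) (Fin n) ℂ) (q : Fin d),
      (fun t => (h t q * M) i j) =o[nhds (0 : ℝ)] (fun t : ℝ => t) := by
    intro M q
    have : ∀ k : Fin n, (fun t => h t q i k * M k j) =o[nhds (0 : ℝ)] (fun t : ℝ => t) := by
      intro k
      refine ((hh q i k).const_mul_left (M k j)).congr' ?_ (by rfl)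
      filter_upwards with t; ring
    have hs := Asymptotics.IsLittleO.sum (s := Finset.univ) (fun k _ => this k)
    refine hs.congr' ?_ (by rfl)
    filter_upwards with t
    rw [Matrix.mul_apply, Finset.sum_apply]
  have hhh : ∀ (q q' : Fin d),
      (fun t => (h t q * h t q') i j) =o[nhds (0 : ℝ)] (fun t : ℝ => t * t) := by
    intro q q'
    have : ∀ k : Fin n,
        (fun t => h t q i k * h t q' k j) =o[nhds (0 : ℝ)] (fun t : ℝ => t * t) :=
      fun k => (hh q i k).mul (hh q' k j)
    have hs := Asymptotics.IsLittleO.sum (s := Finset.univ) (fun k _ => this k)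
    refine hs.congr' ?_ (by rfl)
    filter_upwards with t
    rw [Matrix.mul_apply, Finset.sum_apply]
  have hF2 : F =o[nhds (0 : ℝ)] (fun t : ℝ => t ^ 2) := by
    have hlin : (fun t => ((Γ r * h t s - h t s * Γ r) + (h t r * Γ s - Γ s * h t r)) i j)
        =o[nhds (0 : ℝ)] (fun t : ℝ => t) := by
      have := (((hmulC (Γ r) s).sub (hCmul (Γ r) s)).add
        ((hCmul (Γ s) r).sub (hmulC (Γ s) r)))
      refine this.congr' ?_ (by rfl)
      filter_upwards with t
      simp [Matrix.add_apply, Matrix.sub_apply]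
    have hterm1 : (fun t : ℝ => (t : ℂ) *
        (((Γ r * h t s - h t s * Γ r) + (h t r * Γ s - Γ s * h t r)) i j))
        =o[nhds (0 : ℝ)] (fun t : ℝ => t ^ 2) := by
      have := hcoe.mul_isLittleO hlin
      refine this.congr' (by rfl) ?_
      filter_upwards with t
      ring
    have hterm2 : (fun t => (h t r * h t s - h t s * h t r) i j)
        =o[nhds (0 : ℝ)] (fun t : ℝ => t ^ 2) := by
      have := (hhh r s).sub (hhh s r)
      have h2 : (fun t => (h t r * h t s) i j - (h t s * h t r) i j)
          =o[nhds (0 : ℝ)] (fun t : ℝ => t ^ 2) := by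
        refine this.congr' (by rfl) ?_
        filter_upwards with t; ring
      refine h2.congr' ?_ (by rfl)
      filter_upwards with t
      simp [Matrix.sub_apply]
    exact hterm1.add hterm2
  -- Conclude c = 0.
  have hcsq : (fun t : ℝ => c * (t : ℂ) ^ 2) =o[nhds (0 : ℝ)] (fun t : ℝ => (t : ℂ) ^ 2) := by
    have h1 : (fun t : ℝ => c * (t : ℂ) ^ 2) =o[nhds (0 : ℝ)] (fun t : ℝ => t ^ 2) := by
      refine (hF2.neg_left).congr' ?_ (by rfl)
      filter_upwards [key] with t ht
      exact ht.symm
    refine h1.trans_isBigO (isBigO_of_le _ (fun t => by simp))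
  have hdiv := hcsq.tendsto_div_nhds_zero
  have hdiv' : Tendsto (fun t : ℝ => c * (t : ℂ) ^ 2 / (t : ℂ) ^ 2)
      (nhdsWithin (0 : ℝ) {0}ᶜ) (nhds 0) := hdiv.mono_left nhdsWithin_le_nhds
  have hconst : Tendsto (fun _ : ℝ => c) (nhdsWithin (0 : ℝ) {0}ᶜ) (nhds 0) := by
    refine hdiv'.congr' ?_
    filter_upwards [self_mem_nhdsWithin] with t ht
    have ht' : (t : ℂ) ^ 2 ≠ 0 := by
      simp only [Set.mem_compl_iff, Set.mem_singleton_iff] at ht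
      exact pow_ne_zero _ (by exact_mod_cast ht)
    rw [mul_div_assoc, div_self ht', mul_one]
  exact tendsto_nhds_unique tendsto_const_nhds hconst
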